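/- arXiv:1107.3613 — 8 statements merged into one kernel-verified Lean document; each statement's English description precedes it below -/
import Mathlib

section
/- Let ℓ > 2 be an integer and let λ be a partition that is not an (ℓ,0)-JM partition, i.e. there exist boxes (a,b), (a,y), (x,b) in the Young diagram of λ with ℓ ∣ h_{(a,b)}^λ, ℓ ∤ h_{(a,y)}^λ and ℓ ∤ h_{(x,b)}^λ. Then there exist boxes (c,d), (c,w), (z,d) in the Young diagram of λ with c < z and d < w such that ℓ ∣ h_{(c,d)}^λ, ℓ ∤ h_{(c,w)}^λ and ℓ ∤ h_{(z,d)}^λ. -/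
/-- Hook length of the box in row `a`, column `b` (0-indexed) of a Young diagram:
the number of boxes `(a, b')` with `b' ≥ b` plus the number of boxes `(a', b)` with `a' > a`. -/
def YoungDiagram.hook (μ : YoungDiagram) (a b : ℕ) : ℕ :=
  (μ.rowLen a - b) + (μ.colLen b - (a + 1))

/-- `μ` is an `(ℓ,0)`-JM partition: there do not exist boxes `(a,b)`, `(a,y)`, `(x,b)` of `μ`
with `ℓ ∣ h_{(a,b)}`, `ℓ ∤ h_{(a,y)}` and `ℓ ∤ h_{(x,b)}`. -/
def IsJM (ℓ : ℕ) (μ : YoungDiagram) : Prop :=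
  ¬ ∃ a b y x : ℕ, (a, b) ∈ μ ∧ (a, y) ∈ μ ∧ (x, b) ∈ μ ∧
      ℓ ∣ μ.hook a b ∧ ¬ ℓ ∣ μ.hook a y ∧ ¬ ℓ ∣ μ.hook x b

lemma hook_pos {μ : YoungDiagram} {i j : ℕ} (h : (i, j) ∈ μ) : 0 < μ.hook i j := by
  have h1 := YoungDiagram.mem_iff_lt_rowLen.mp h
  simp only [YoungDiagram.hook]
  omega

lemma hook_transpose {μ : YoungDiagram} {i j : ℕ} (h : (j, i) ∈ μ) :
    μ.transpose.hook i j = μ.hook j i := by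
  have h1 := YoungDiagram.mem_iff_lt_rowLen.mp h
  have h2 := YoungDiagram.mem_iff_lt_colLen.mp h
  simp only [YoungDiagram.hook, YoungDiagram.rowLen_transpose, YoungDiagram.colLen_transpose]
  omega

lemma notdvd' {ℓ n r m : ℕ} (h : ℓ ∣ n) (h2 : m + r = n) (hr0 : 0 < r) (hrl : r < ℓ) :
    ¬ ℓ ∣ m := by
  intro hd
  have h3 : ℓ ∣ n - m := Nat.dvd_sub h hd
  rw [show n - m = r by omega] at h3
  exact absurd (Nat.le_of_dvd hr0 h3) (by omega)

lemma step2 {ℓ : ℕ} (hℓ : 2 < ℓ) (μ : YoungDiagram) {a b y : ℕ}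
    (hab : (a, b) ∈ μ) (hdiv : ℓ ∣ μ.hook a b)
    (hay : (a, y) ∈ μ) (hny : ¬ ℓ ∣ μ.hook a y)
    (hyb : y < b)
    (hall : ∀ j, b < j → (a, j) ∈ μ → ℓ ∣ μ.hook a j) :
    ∃ c d w z : ℕ, c < z ∧ d < w ∧ (c, d) ∈ μ ∧ (c, w) ∈ μ ∧ (z, d) ∈ μ ∧
      ℓ ∣ μ.hook c d ∧ ¬ ℓ ∣ μ.hook c w ∧ ¬ ℓ ∣ μ.hook z d := by
  have hbL : b < μ.rowLen a := YoungDiagram.mem_iff_lt_rowLen.mp hab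
  have hyL : y < μ.rowLen a := YoungDiagram.mem_iff_lt_rowLen.mp hay
  -- the last box of row a
  have haj0 : (a, μ.rowLen a - 1) ∈ μ := YoungDiagram.mem_iff_lt_rowLen.mpr (by omega)
  have hacol : a < μ.colLen (μ.rowLen a - 1) := YoungDiagram.mem_iff_lt_colLen.mp haj0
  have hdivj0 : ℓ ∣ μ.hook a (μ.rowLen a - 1) := by
    rcases eq_or_lt_of_le (show b ≤ μ.rowLen a - 1 by omega) with heq | hlt
    · rw [← heq]; exact hdiv
    · exact hall _ hlt haj0
  have hookj0eq : μ.hook a (μ.rowLen a - 1) = μ.colLen (μ.rowLen a - 1) - a := by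
    simp only [YoungDiagram.hook]; omega
  have hcolbig : a + ℓ ≤ μ.colLen (μ.rowLen a - 1) := by
    have h1 : ℓ ≤ μ.hook a (μ.rowLen a - 1) := Nat.le_of_dvd (hook_pos haj0) hdivj0
    omega
  have hcolj : ∀ j, j < μ.rowLen a → a + ℓ ≤ μ.colLen j := by
    intro j hj
    have := μ.colLen_anti j (μ.rowLen a - 1) (by omega)
    omega
  have hmem : ∀ t j, t < ℓ → j < μ.rowLen a → (a + t, j) ∈ μ := by
    intro t j ht hj
    exact YoungDiagram.mem_iff_lt_colLen.mpr (by have := hcolj j hj; omega)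
  have hrowt : ∀ t, t < ℓ → μ.rowLen (a + t) = μ.rowLen a := by
    intro t ht
    have h1 : μ.rowLen a - 1 < μ.rowLen (a + t) :=
      YoungDiagram.mem_iff_lt_rowLen.mp (hmem t (μ.rowLen a - 1) ht (by omega))
    have h2 := μ.rowLen_anti a (a + t) (by omega)
    omega
  have hstep : ∀ t j, t < ℓ → j < μ.rowLen a → μ.hook (a + t) j + t = μ.hook a j := by
    intro t j ht hj
    have h1 := hcolj j hj
    have h2 := hrowt t ht
    simp only [YoungDiagram.hook]
    omega
  -- hook of (a,y) is strictly bigger than hook of (a,b)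
  have hHyb : μ.hook a b < μ.hook a y := by
    have h1 := μ.colLen_anti y b (le_of_lt hyb)
    have h2 : a < μ.colLen b := YoungDiagram.mem_iff_lt_colLen.mp hab
    have h3 : a < μ.colLen y := YoungDiagram.mem_iff_lt_colLen.mp hay
    simp only [YoungDiagram.hook]
    omega
  have hHb : ℓ ≤ μ.hook a b := Nat.le_of_dvd (hook_pos hab) hdiv
  have hHy : ℓ + 1 ≤ μ.hook a y := by omega
  have hs0 : μ.hook a y % ℓ ≠ 0 := fun h0 => hny (Nat.dvd_of_mod_eq_zero h0)
  have hsl : μ.hook a y % ℓ < ℓ := Nat.mod_lt _ (by omega)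
  have hmody := Nat.div_add_mod (μ.hook a y) ℓ
  have hdvd_ys : ℓ ∣ μ.hook a y - μ.hook a y % ℓ := ⟨μ.hook a y / ℓ, by omega⟩
  rcases Nat.lt_or_ge (μ.hook a y % ℓ) (ℓ - 1) with hcase | hcase
  · -- Case A : residue s ≤ ℓ - 2
    refine ⟨a + (μ.hook a y % ℓ), y, b, a + (μ.hook a y % ℓ) + 1, by omega, hyb,
      hmem _ y (by omega) hyL, hmem _ b (by omega) hbL, ?_, ?_, ?_, ?_⟩
    · have := hmem (μ.hook a y % ℓ + 1) y (by omega) hyL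
      rwa [show a + (μ.hook a y % ℓ + 1) = a + (μ.hook a y % ℓ) + 1 by omega] at this
    · have h1 := hstep (μ.hook a y % ℓ) y (by omega) hyL
      rwa [show μ.hook a y - μ.hook a y % ℓ = μ.hook (a + (μ.hook a y % ℓ)) y by omega]
        at hdvd_ys
    · have h1 := hstep (μ.hook a y % ℓ) b (by omega) hbL
      exact notdvd' (r := μ.hook a y % ℓ) hdiv h1 (by omega) (by omega)
    · have h1 := hstep (μ.hook a y % ℓ + 1) y (by omega) hyL
      rw [show a + (μ.hook a y % ℓ) + 1 = a + (μ.hook a y % ℓ + 1) by omega]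
      exact notdvd' (r := 1) hdvd_ys (by omega) one_pos (by omega)
  · -- Case B : residue s = ℓ - 1
    have hseq : μ.hook a y % ℓ = ℓ - 1 := by omega
    by_cases hzy : ∃ z, a + (ℓ - 1) < z ∧ (z, y) ∈ μ ∧ ¬ ℓ ∣ μ.hook z y
    · obtain ⟨z, hz1, hz2, hz3⟩ := hzy
      refine ⟨a + (ℓ - 1), y, b, z, hz1, hyb, hmem (ℓ - 1) y (by omega) hyL,
        hmem (ℓ - 1) b (by omega) hbL, hz2, ?_, ?_, hz3⟩
      · have h1 := hstep (ℓ - 1) y (by omega) hyL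
        rwa [show μ.hook a y - μ.hook a y % ℓ = μ.hook (a + (ℓ - 1)) y by omega] at hdvd_ys
      · have h1 := hstep (ℓ - 1) b (by omega) hbL
        exact notdvd' (r := ℓ - 1) hdiv h1 (by omega) (by omega)
    · push_neg at hzy
      have hKy : a + ℓ ≤ μ.colLen y := hcolj y hyL
      have hKmem : (μ.colLen y - 1, y) ∈ μ := YoungDiagram.mem_iff_lt_colLen.mpr (by omega)
      have hKrow : y < μ.rowLen (μ.colLen y - 1) := YoungDiagram.mem_iff_lt_rowLen.mp hKmem
      have hookK : μ.hook (μ.colLen y - 1) y = μ.rowLen (μ.colLen y - 1) - y := by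
        simp only [YoungDiagram.hook]; omega
      have hdivK : ℓ ∣ μ.hook (μ.colLen y - 1) y := by
        rcases Nat.lt_or_ge (a + (ℓ - 1)) (μ.colLen y - 1) with hlt | hge
        · exact hzy _ hlt hKmem
        · have heq : μ.colLen y - 1 = a + (ℓ - 1) := by omega
          rw [heq]
          have h1 := hstep (ℓ - 1) y (by omega) hyL
          rwa [show μ.hook a y - μ.hook a y % ℓ = μ.hook (a + (ℓ - 1)) y by omega] at hdvd_ys
      have hrowK : y + ℓ ≤ μ.rowLen (μ.colLen y - 1) := by
        have h1 : ℓ ≤ μ.hook (μ.colLen y - 1) y := Nat.le_of_dvd (hook_pos hKmem) hdivK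
        omega
      have hmem2 : (μ.colLen y - 1, y + 1) ∈ μ := YoungDiagram.mem_iff_lt_rowLen.mpr (by omega)
      have hcolY1 : μ.colLen (y + 1) = μ.colLen y := by
        have h1 : μ.colLen y - 1 < μ.colLen (y + 1) := YoungDiagram.mem_iff_lt_colLen.mp hmem2
        have h2 := μ.colLen_anti y (y + 1) (by omega)
        omega
      have hy1L : y + 1 < μ.rowLen a := by omega
      have hH1 : μ.hook a (y + 1) + 1 = μ.hook a y := by
        have h3 : a < μ.colLen y := YoungDiagram.mem_iff_lt_colLen.mp hay
        simp only [YoungDiagram.hook]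
        omega
      have hyb1 : y + 1 < b := by
        by_contra hc
        have hb1 : b = y + 1 := by omega
        rw [hb1] at hdiv
        exact notdvd' (r := ℓ - 2) hdiv (by omega) (by omega) (by omega) hdvd_ys
      refine ⟨a + (ℓ - 2), y + 1, b, a + (ℓ - 1), by omega, hyb1,
        hmem (ℓ - 2) (y + 1) (by omega) hy1L, hmem (ℓ - 2) b (by omega) hbL,
        hmem (ℓ - 1) (y + 1) (by omega) hy1L, ?_, ?_, ?_⟩
      · have h1 := hstep (ℓ - 2) (y + 1) (by omega) hy1L
        rwa [show μ.hook a y - μ.hook a y % ℓ = μ.hook (a + (ℓ - 2)) (y + 1) by omega]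
          at hdvd_ys
      · have h1 := hstep (ℓ - 2) b (by omega) hbL
        exact notdvd' (r := ℓ - 2) hdiv h1 (by omega) (by omega)
      · have h1 := hstep (ℓ - 1) (y + 1) (by omega) hy1L
        exact notdvd' (r := 1) hdvd_ys (by omega) one_pos (by omega)

/-- If `λ` is not an `(ℓ,0)`-JM partition, then there are witnessing boxes `(c,d)`, `(c,w)`,
`(z,d)` with `c < z` and `d < w`. -/
theorem rearrange (ℓ : ℕ) (hℓ : 2 < ℓ) (lam : YoungDiagram) (h : ¬ IsJM ℓ lam) :
    ∃ c d w z : ℕ, c < z ∧ d < w ∧ (c, d) ∈ lam ∧ (c, w) ∈ lam ∧ (z, d) ∈ lam ∧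
      ℓ ∣ lam.hook c d ∧ ¬ ℓ ∣ lam.hook c w ∧ ¬ ℓ ∣ lam.hook z d := by
  rw [IsJM, not_not] at h
  obtain ⟨a, b, y, x, hab, hay, hxb, hdiv, hny, hnx⟩ := h
  by_cases hR : ∃ w, b < w ∧ (a, w) ∈ lam ∧ ¬ ℓ ∣ lam.hook a w
  · obtain ⟨w, hw1, hw2, hw3⟩ := hR
    by_cases hD : ∃ z, a < z ∧ (z, b) ∈ lam ∧ ¬ ℓ ∣ lam.hook z b
    · obtain ⟨z, hz1, hz2, hz3⟩ := hD
      exact ⟨a, b, w, z, hz1, hw1, hab, hw2, hz2, hdiv, hw3, hz3⟩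
    · push_neg at hD
      have hxa : x < a := by
        rcases Nat.lt_trichotomy x a with h' | h' | h'
        · exact h'
        · exact absurd (h' ▸ hdiv) hnx
        · exact absurd (hD x h' hxb) hnx
      have htab : (b, a) ∈ lam.transpose := YoungDiagram.mem_transpose.mpr hab
      have htxb : (b, x) ∈ lam.transpose := YoungDiagram.mem_transpose.mpr hxb
      have htr := step2 hℓ lam.transpose (a := b) (b := a) (y := x) htab
        (by rwa [hook_transpose hab]) htxb (by rwa [hook_transpose hxb]) hxa
        (by
          intro j hj hjm
          have hjm' : (j, b) ∈ lam := YoungDiagram.mem_transpose.mp hjm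
          rw [hook_transpose hjm']
          exact hD j hj hjm')
      obtain ⟨c, d, w', z', h1, h2, h3, h4, h5, h6, h7, h8⟩ := htr
      have h3' : (d, c) ∈ lam := YoungDiagram.mem_transpose.mp h3
      have h4' : (w', c) ∈ lam := YoungDiagram.mem_transpose.mp h4
      have h5' : (d, z') ∈ lam := YoungDiagram.mem_transpose.mp h5
      refine ⟨d, c, z', w', h2, h1, h3', h5', h4', ?_, ?_, ?_⟩
      · rwa [hook_transpose h3'] at h6
      · rwa [hook_transpose h5'] at h8
      · rwa [hook_transpose h4'] at h7
  · push_neg at hR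
    have hyb : y < b := by
      rcases Nat.lt_trichotomy y b with h' | h' | h'
      · exact h'
      · exact absurd (h' ▸ hdiv) hny
      · exact absurd (hR y h' hay) hny
    exact step2 hℓ lam hab hdiv hay hny hyb hR
end

section
/- Let ℓ > 2 be an integer, let λ and μ be partitions (Young diagrams) with λ ⊆ μ such that the set μ∖λ consists of exactly ℓ boxes, all lying in a single row (so μ is obtained from λ by adding a horizontal ℓ-rim hook). If λ is not an (ℓ,0)-JM partition, then μ is not an (ℓ,0)-JM partition. -/
/-- Adding a horizontal `ℓ`-rim hook (ℓ boxes in a single row) to a partition that is not an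
`(ℓ,0)`-JM partition yields a partition that is not an `(ℓ,0)`-JM partition. -/
theorem add_horizontal_rim_hook_not_JM (ℓ : ℕ) (hℓ : 2 < ℓ) (lam mu : YoungDiagram)
    (hsub : lam.cells ⊆ mu.cells)
    (hcard : (mu.cells \ lam.cells).card = ℓ)
    (hrow : ∃ r : ℕ, ∀ c ∈ mu.cells \ lam.cells, c.1 = r)
    (h : ¬ IsJM ℓ lam) : ¬ IsJM ℓ mu := by
  rw [IsJM, not_not] at h
  rw [IsJM, not_not]
  obtain ⟨a, b, y, x, hab, hay, hxb, hd, hn1, hn2⟩ := h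
  obtain ⟨r, hr⟩ := hrow
  set q := lam.rowLen r with hq
  have hmem_sub : ∀ p : ℕ × ℕ, p ∈ lam → p ∈ mu := fun p hp =>
    (mu.mem_cells p).1 (hsub ((lam.mem_cells p).2 hp))
  have hrow_le : ∀ i : ℕ, lam.rowLen i ≤ mu.rowLen i := by
    intro i
    by_contra hlt
    push_neg at hlt
    have h1 : (i, mu.rowLen i) ∈ lam := YoungDiagram.mem_iff_lt_rowLen.2 hlt
    have h2 := hmem_sub _ h1
    rw [YoungDiagram.mem_iff_lt_rowLen] at h2
    omega
  have hdiff : ∀ i c : ℕ, (i, c) ∈ mu ∧ (i, c) ∉ lam ↔ (i = r ∧ q ≤ c ∧ c < mu.rowLen r) := by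
    intro i c
    constructor
    · rintro ⟨h1, h2⟩
      have hd' : (i, c) ∈ mu.cells \ lam.cells := by
        simp [Finset.mem_sdiff, YoungDiagram.mem_cells, h1, h2]
      have hir := hr _ hd'
      simp only at hir
      subst hir
      refine ⟨rfl, ?_, YoungDiagram.mem_iff_lt_rowLen.1 h1⟩
      by_contra hc; push_neg at hc
      exact h2 (YoungDiagram.mem_iff_lt_rowLen.2 (by omega))
    · rintro ⟨rfl, h1, h2⟩
      refine ⟨YoungDiagram.mem_iff_lt_rowLen.2 h2, fun hc => ?_⟩
      have := YoungDiagram.mem_iff_lt_rowLen.1 hc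
      omega
  have hmur : mu.rowLen r = q + ℓ := by
    have hset : mu.cells \ lam.cells = (Finset.Ico q (mu.rowLen r)).image (fun c => (r, c)) := by
      ext p
      obtain ⟨i, c⟩ := p
      simp only [Finset.mem_sdiff, Finset.mem_image, Finset.mem_Ico, YoungDiagram.mem_cells]
      constructor
      · intro hp
        have hh := (hdiff i c).1 ⟨hp.1, hp.2⟩
        exact ⟨c, ⟨hh.2.1, hh.2.2⟩, by rw [hh.1]⟩
      · rintro ⟨c', ⟨h1, h2⟩, heq⟩
        have e1 : r = i := congrArg Prod.fst heq
        have e2 : c' = c := congrArg Prod.snd heq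
        subst e1; subst e2
        exact (hdiff r c').2 ⟨rfl, h1, h2⟩
    have hcard2 : (mu.cells \ lam.cells).card = mu.rowLen r - q := by
      rw [hset, Finset.card_image_of_injective _ (fun c1 c2 hh => congrArg Prod.snd hh),
        Nat.card_Ico]
    have := hrow_le r
    omega
  have hrow_ne : ∀ i : ℕ, i ≠ r → mu.rowLen i = lam.rowLen i := by
    intro i hi
    refine le_antisymm ?_ (hrow_le i)
    by_contra hlt; push_neg at hlt
    have h1 : (i, lam.rowLen i) ∈ mu := YoungDiagram.mem_iff_lt_rowLen.2 hlt
    have h2 : (i, lam.rowLen i) ∉ lam := fun hc => by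
      have := YoungDiagram.mem_iff_lt_rowLen.1 hc; omega
    exact hi ((hdiff _ _).1 ⟨h1, h2⟩).1
  have habove : ∀ i : ℕ, i < r → q + ℓ ≤ lam.rowLen i := by
    intro i hi
    have h1 : mu.rowLen r ≤ mu.rowLen i := mu.rowLen_anti _ _ (le_of_lt hi)
    rw [hmur, hrow_ne i (by omega)] at h1
    exact h1
  have hwin_mem : ∀ i c : ℕ, i < r → c < q + ℓ → (i, c) ∈ lam :=
    fun i c hi hc => YoungDiagram.mem_iff_lt_rowLen.2 (lt_of_lt_of_le hc (habove i hi))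
  have hrow_lt : ∀ i c : ℕ, (i, c) ∈ lam → q ≤ c → i < r := by
    intro i c hic hc
    by_contra hge; push_neg at hge
    have h1 := YoungDiagram.mem_iff_lt_rowLen.1 hic
    have h2 := lam.rowLen_anti r i hge
    omega
  have hcol_lam : ∀ c : ℕ, q ≤ c → c < q + ℓ → lam.colLen c = r := by
    intro c h1 h2
    have hub : lam.colLen c ≤ r := by
      by_contra hc; push_neg at hc
      have hm : (r, c) ∈ lam := YoungDiagram.mem_iff_lt_colLen.2 hc
      have := YoungDiagram.mem_iff_lt_rowLen.1 hm
      omega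
    have hlb : r ≤ lam.colLen c := by
      rcases Nat.eq_zero_or_pos r with h0 | h0
      · omega
      · have hm : (r - 1, c) ∈ lam := hwin_mem _ _ (by omega) h2
        have := YoungDiagram.mem_iff_lt_colLen.1 hm
        omega
    omega
  have hcol_mu_win : ∀ c : ℕ, q ≤ c → c < q + ℓ → mu.colLen c = r + 1 := by
    intro c h1 h2
    have hmem : (r, c) ∈ mu := YoungDiagram.mem_iff_lt_rowLen.2 (by omega)
    have hlb := YoungDiagram.mem_iff_lt_colLen.1 hmem
    have hub : mu.colLen c ≤ r + 1 := by
      by_contra hc; push_neg at hc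
      have hmem2 : (r + 1, c) ∈ mu := YoungDiagram.mem_iff_lt_colLen.2 (by omega)
      have hnl : (r + 1, c) ∉ lam := fun hc' => by
        have := hrow_lt _ _ hc' h1; omega
      have := ((hdiff (r + 1) c).1 ⟨hmem2, hnl⟩).1
      omega
    omega
  have hcol_out : ∀ c : ℕ, c < q ∨ q + ℓ ≤ c → mu.colLen c = lam.colLen c := by
    intro c hc
    have h1 : mu.colLen c ≤ lam.colLen c := by
      by_contra hcc; push_neg at hcc
      have hmem : (lam.colLen c, c) ∈ mu := YoungDiagram.mem_iff_lt_colLen.2 hcc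
      have hnl : (lam.colLen c, c) ∉ lam := fun hc' => by
        have := YoungDiagram.mem_iff_lt_colLen.1 hc'; omega
      have := ((hdiff _ _).1 ⟨hmem, hnl⟩).2
      omega
    have h2 : lam.colLen c ≤ mu.colLen c := by
      by_contra hcc; push_neg at hcc
      have hmem : (mu.colLen c, c) ∈ lam := YoungDiagram.mem_iff_lt_colLen.2 hcc
      have := YoungDiagram.mem_iff_lt_colLen.1 (hmem_sub _ hmem)
      omega
    omega
  have hookA : ∀ i c : ℕ, i < r → q ≤ c → c < q + ℓ → mu.hook i c = lam.hook i c + 1 := by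
    intro i c h1 h2 h3
    unfold YoungDiagram.hook
    rw [hrow_ne i (by omega), hcol_mu_win c h2 h3, hcol_lam c h2 h3]
    omega
  have hookB : ∀ i c : ℕ, i ≠ r → (c < q ∨ q + ℓ ≤ c) → mu.hook i c = lam.hook i c := by
    intro i c h1 h2
    unfold YoungDiagram.hook
    rw [hrow_ne i h1, hcol_out c h2]
  have hookC : ∀ c : ℕ, c < q → mu.hook r c = lam.hook r c + ℓ := by
    intro c h1
    unfold YoungDiagram.hook
    rw [hmur, hcol_out c (Or.inl h1), ← hq]
    omega
  have hookD : ∀ i j : ℕ, i < r → j < ℓ → lam.hook i (q + j) + j = lam.hook i q := by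
    intro i j h1 h2
    unfold YoungDiagram.hook
    rw [hcol_lam (q + j) (by omega) (by omega), hcol_lam q le_rfl (by omega)]
    have := habove i h1
    omega
  have hookE : ∀ j : ℕ, j < ℓ → mu.hook r (q + j) = ℓ - j := by
    intro j h1
    unfold YoungDiagram.hook
    rw [hmur, hcol_mu_win (q + j) (by omega) (by omega)]
    omega
  have pres : ∀ i c : ℕ, (i, c) ∈ lam → (c < q ∨ q + ℓ ≤ c) →
      (ℓ ∣ mu.hook i c ↔ ℓ ∣ lam.hook i c) := by
    intro i c hm hc
    rcases eq_or_ne i r with heq | hne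
    · rw [heq] at hm ⊢
      have hcq : c < q := by
        have := YoungDiagram.mem_iff_lt_rowLen.1 hm
        omega
      rw [hookC c hcq]
      constructor
      · intro hdd
        have h1 : ℓ ∣ (lam.hook r c + ℓ) - ℓ := Nat.dvd_sub hdd (dvd_refl ℓ)
        simpa using h1
      · intro hdd; exact Nat.dvd_add hdd (dvd_refl ℓ)
    · rw [hookB i c hne hc]
  by_cases heasy : ∀ x' : ℕ, x' < r → ℓ ∣ mu.hook x' q
  · -- hard case
    have key : ∀ i : ℕ, i < r → ℓ ∣ lam.hook i q + 1 := by
      intro i hi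
      have hh := heasy i hi
      rwa [hookA i q hi le_rfl (by omega)] at hh
    have hbq : b < q ∨ q + ℓ ≤ b := by
      by_contra hc; push_neg at hc
      obtain ⟨hc1, hc2⟩ := hc
      have har : a < r := hrow_lt a b hab hc1
      have hxr : x < r := hrow_lt x b hxb hc1
      have hda := hookD a (b - q) har (by omega)
      have hdx := hookD x (b - q) hxr (by omega)
      rw [show q + (b - q) = b by omega] at hda hdx
      have hka := key a har
      have hkx := key x hxr
      have h1 : ℓ ∣ (b - q) + 1 := by
        have he : lam.hook a q + 1 = lam.hook a b + ((b - q) + 1) := by omega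
        rw [he] at hka
        exact (Nat.dvd_add_right hd).mp hka
      have h2 : b - q + 1 = ℓ := by
        have := Nat.le_of_dvd (by omega) h1
        omega
      apply hn2
      have he : lam.hook x q + 1 = ℓ + lam.hook x b := by omega
      rw [he] at hkx
      exact (Nat.dvd_add_right (dvd_refl ℓ)).mp hkx
    have hdb : ℓ ∣ mu.hook a b := (pres a b hab hbq).2 hd
    have hdx : ¬ ℓ ∣ mu.hook x b := fun hc => hn2 ((pres x b hxb hbq).1 hc)
    by_cases hyw : y < q ∨ q + ℓ ≤ y
    · exact ⟨a, b, y, x, hmem_sub _ hab, hmem_sub _ hay, hmem_sub _ hxb, hdb,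
        fun hc => hn1 ((pres a y hay hyw).1 hc), hdx⟩
    · push_neg at hyw
      have har : a < r := hrow_lt a y hay hyw.1
      refine ⟨a, b, q + 1, x, hmem_sub _ hab,
        hmem_sub _ (hwin_mem a (q + 1) har (by omega)), hmem_sub _ hxb, hdb, ?_, hdx⟩
      intro hc
      rw [hookA a (q + 1) har (by omega) (by omega)] at hc
      have hd1 := hookD a 1 har (by omega)
      rw [hd1] at hc
      have hka := key a har
      have h1 : ℓ ∣ 1 := (Nat.dvd_add_right hc).mp hka
      have := Nat.le_of_dvd one_pos h1
      omega
  · -- easy case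
    push_neg at heasy
    obtain ⟨x', hx'r, hx'nd⟩ := heasy
    refine ⟨r, q, q + 1, x', YoungDiagram.mem_iff_lt_rowLen.2 (by omega),
      YoungDiagram.mem_iff_lt_rowLen.2 (by omega),
      hmem_sub _ (hwin_mem x' q hx'r (by omega)), ?_, ?_, hx'nd⟩
    · have h0 : mu.hook r q = ℓ := by
        have := hookE 0 (by omega)
        simpa using this
      rw [h0]
    · have h1 : mu.hook r (q + 1) = ℓ - 1 := hookE 1 (by omega)
      rw [h1]
      intro hdd
      have := Nat.le_of_dvd (by omega) hdd
      omega
end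

section
/- Let ℓ > 2 be an integer, let λ and μ be partitions (Young diagrams) with λ ⊆ μ such that the set μ∖λ consists of exactly ℓ boxes, all lying in a single column (so μ is obtained from λ by adding a vertical ℓ-rim hook). If λ is not an (ℓ,0)-JM partition, then μ is not an (ℓ,0)-JM partition. -/
/-- Adding a vertical `ℓ`-rim hook (ℓ boxes in a single column) to a partition that is not an
`(ℓ,0)`-JM partition yields a partition that is not an `(ℓ,0)`-JM partition. -/
theorem add_vertical_rim_hook_not_JM (ℓ : ℕ) (hℓ : 2 < ℓ) (lam mu : YoungDiagram)
    (hsub : lam.cells ⊆ mu.cells)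
    (hcard : (mu.cells \ lam.cells).card = ℓ)
    (hcol : ∃ c : ℕ, ∀ x ∈ mu.cells \ lam.cells, x.2 = c)
    (h : ¬ IsJM ℓ lam) : ¬ IsJM ℓ mu := by
  obtain ⟨c, hc⟩ := hcol
  rw [IsJM, not_not] at h ⊢
  obtain ⟨a, b, y, x, hab, hay, hxb, hd1, hd2, hd3⟩ := h
  set s := lam.colLen c with hs
  have hsub' : ∀ p : ℕ × ℕ, p ∈ lam → p ∈ mu := by
    intro p hp
    rw [← YoungDiagram.mem_cells] at hp ⊢
    exact hsub hp
  -- colLen of mu at c is at least s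
  have hslec : s ≤ mu.colLen c := by
    rcases Nat.eq_zero_or_pos s with h0 | h0
    · omega
    · have h1 : (s - 1, c) ∈ lam := by
        rw [YoungDiagram.mem_iff_lt_colLen]; omega
      have h2 := hsub' _ h1
      rw [YoungDiagram.mem_iff_lt_colLen] at h2
      omega
  -- description of the skew diagram
  have hDiff : mu.cells \ lam.cells
      = (Finset.Ico s (mu.colLen c)).image (fun r => (r, c)) := by
    ext p
    simp only [Finset.mem_sdiff, Finset.mem_image, Finset.mem_Ico, YoungDiagram.mem_cells]
    constructor
    · rintro ⟨hpm, hpl⟩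
      have hpc : p.2 = c := by
        apply hc
        rw [Finset.mem_sdiff, YoungDiagram.mem_cells, YoungDiagram.mem_cells]
        exact ⟨hpm, hpl⟩
      have hpm' : (p.1, c) ∈ mu := by rw [← hpc]; exact hpm
      have hpl' : ¬ (p.1, c) ∈ lam := by rw [← hpc]; exact hpl
      rw [YoungDiagram.mem_iff_lt_colLen] at hpm' hpl'
      exact ⟨p.1, ⟨by omega, hpm'⟩, by rw [← hpc]⟩
    · rintro ⟨r, ⟨hr1, hr2⟩, rfl⟩
      constructor
      · rw [YoungDiagram.mem_iff_lt_colLen]; exact hr2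
      · rw [YoungDiagram.mem_iff_lt_colLen]; omega
  -- colLen of mu at c
  have hcolc : mu.colLen c = s + ℓ := by
    have hci : (Finset.Ico s (mu.colLen c)).card = mu.colLen c - s := Nat.card_Ico _ _
    have hinj : Function.Injective (fun r : ℕ => (r, c)) := by
      intro r1 r2 hh
      simpa using hh
    rw [hDiff, Finset.card_image_of_injective _ hinj, hci] at hcard
    omega
  -- membership characterization in mu
  have hmem : ∀ r j : ℕ, ((r, j) ∈ mu ↔ ((r, j) ∈ lam ∨ (j = c ∧ s ≤ r ∧ r < s + ℓ))) := by
    intro r j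
    constructor
    · intro hm
      by_cases hl : (r, j) ∈ lam
      · exact Or.inl hl
      · right
        have hd : (r, j) ∈ mu.cells \ lam.cells := by
          rw [Finset.mem_sdiff, YoungDiagram.mem_cells, YoungDiagram.mem_cells]
          exact ⟨hm, hl⟩
        rw [hDiff] at hd
        simp only [Finset.mem_image, Finset.mem_Ico] at hd
        obtain ⟨r', ⟨hr1, hr2⟩, hr3⟩ := hd
        injection hr3 with hA hB
        subst hA; subst hB
        exact ⟨rfl, hr1, by omega⟩
    · rintro (hl | ⟨rfl, hr1, hr2⟩)
      · exact hsub' _ hl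
      · rw [YoungDiagram.mem_iff_lt_colLen]; omega
  -- row lengths of lam in the rim hook rows
  have hrowlam : ∀ r, s ≤ r → r < s + ℓ → lam.rowLen r = c := by
    intro r hr1 hr2
    have hnotc : ¬ (r, c) ∈ lam := by rw [YoungDiagram.mem_iff_lt_colLen]; omega
    have hle : lam.rowLen r ≤ c := by
      by_contra hcon
      push_neg at hcon
      exact hnotc (by rw [YoungDiagram.mem_iff_lt_rowLen]; omega)
    rcases Nat.eq_zero_or_pos c with h0 | h0
    · omega
    · have hmc : (r, c) ∈ mu := (hmem r c).mpr (Or.inr ⟨rfl, hr1, hr2⟩)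
      have hmc' : (r, c - 1) ∈ mu := mu.up_left_mem le_rfl (by omega) hmc
      have : (r, c - 1) ∈ lam := by
        rcases (hmem r (c - 1)).mp hmc' with hl | ⟨hcc, _⟩
        · exact hl
        · omega
      rw [YoungDiagram.mem_iff_lt_rowLen] at this
      omega
  -- row lengths of mu in the rim hook rows
  have hrowmu : ∀ r, s ≤ r → r < s + ℓ → mu.rowLen r = c + 1 := by
    intro r hr1 hr2
    have hmc : (r, c) ∈ mu := (hmem r c).mpr (Or.inr ⟨rfl, hr1, hr2⟩)
    rw [YoungDiagram.mem_iff_lt_rowLen] at hmc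
    have hle : mu.rowLen r ≤ c + 1 := by
      by_contra hcon
      push_neg at hcon
      have hmm : (r, c + 1) ∈ mu := by rw [YoungDiagram.mem_iff_lt_rowLen]; omega
      rcases (hmem r (c + 1)).mp hmm with hl | ⟨hcc, _⟩
      · have := lam.up_left_mem (le_refl r) (by omega : c ≤ c + 1) hl
        rw [YoungDiagram.mem_iff_lt_colLen] at this
        omega
      · omega
    omega
  -- row lengths outside the rim hook rows are unchanged
  have hrowO : ∀ r, (r < s ∨ s + ℓ ≤ r) → mu.rowLen r = lam.rowLen r := by
    intro r hr
    have hge : lam.rowLen r ≤ mu.rowLen r := by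
      rcases Nat.eq_zero_or_pos (lam.rowLen r) with h0 | h0
      · omega
      · have h1 : (r, lam.rowLen r - 1) ∈ lam := by
          rw [YoungDiagram.mem_iff_lt_rowLen]; omega
        have h2 := hsub' _ h1
        rw [YoungDiagram.mem_iff_lt_rowLen] at h2
        omega
    have hle : mu.rowLen r ≤ lam.rowLen r := by
      by_contra hcon
      push_neg at hcon
      have hmm : (r, lam.rowLen r) ∈ mu := by rw [YoungDiagram.mem_iff_lt_rowLen]; omega
      rcases (hmem r (lam.rowLen r)).mp hmm with hl | ⟨hcc, hr1, hr2⟩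
      · rw [YoungDiagram.mem_iff_lt_rowLen] at hl; omega
      · omega
    omega
  -- column lengths away from c are unchanged
  have hcolO : ∀ j, j ≠ c → mu.colLen j = lam.colLen j := by
    intro j hj
    have hge : lam.colLen j ≤ mu.colLen j := by
      rcases Nat.eq_zero_or_pos (lam.colLen j) with h0 | h0
      · omega
      · have h1 : (lam.colLen j - 1, j) ∈ lam := by
          rw [YoungDiagram.mem_iff_lt_colLen]; omega
        have h2 := hsub' _ h1
        rw [YoungDiagram.mem_iff_lt_colLen] at h2
        omega
    have hle : mu.colLen j ≤ lam.colLen j := by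
      by_contra hcon
      push_neg at hcon
      have hmm : (lam.colLen j, j) ∈ mu := by rw [YoungDiagram.mem_iff_lt_colLen]; omega
      rcases (hmem (lam.colLen j) j).mp hmm with hl | ⟨hcc, _⟩
      · rw [YoungDiagram.mem_iff_lt_colLen] at hl; omega
      · exact hj hcc
    omega
  -- columns left of c are long in lam
  have hcolbig : ∀ j, j < c → s + ℓ ≤ lam.colLen j := by
    intro j hj
    have h1 : (s + ℓ - 1, j) ∈ lam := by
      rw [YoungDiagram.mem_iff_lt_rowLen, hrowlam (s + ℓ - 1) (by omega) (by omega)]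
      exact hj
    rw [YoungDiagram.mem_iff_lt_colLen] at h1
    omega
  -- hook relation within the rim hook rows of lam
  have hrel : ∀ r j, s ≤ r → r < s + ℓ → j < c →
      lam.hook r j + (r - s) = lam.hook s j := by
    intro r j hr1 hr2 hj
    have hb := hcolbig j hj
    have e1 := hrowlam r hr1 hr2
    have e2 := hrowlam s (le_refl s) (by omega)
    simp only [YoungDiagram.hook, e1, e2]
    omega
  -- hooks add 1 for old boxes in the rim hook rows
  have hplus1 : ∀ r j, s ≤ r → r < s + ℓ → j < c →
      mu.hook r j = lam.hook r j + 1 := by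
    intro r j hr1 hr2 hj
    have hb := hcolbig j hj
    have e1 := hrowmu r hr1 hr2
    have e2 := hrowlam r hr1 hr2
    have e3 := hcolO j (by omega)
    simp only [YoungDiagram.hook, e1, e2, e3]
    omega
  -- divisibility of hooks is unchanged outside the rim hook rows
  have hmod : ∀ r j, (r, j) ∈ lam → (r < s ∨ s + ℓ ≤ r) →
      (ℓ ∣ mu.hook r j ↔ ℓ ∣ lam.hook r j) := by
    intro r j hrl hr
    by_cases hj : j = c
    · have hrs : r < s := by
        rw [hj, YoungDiagram.mem_iff_lt_colLen] at hrl
        omega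
      have e1 := hrowO r hr
      have e2 : mu.hook r j = lam.hook r j + ℓ := by
        simp only [YoungDiagram.hook, e1, hj, hcolc, ← hs]
        omega
      rw [e2]
      exact Nat.dvd_add_self_right
    · have e1 := hrowO r hr
      have e2 := hcolO j hj
      have e3 : mu.hook r j = lam.hook r j := by
        simp only [YoungDiagram.hook, e1, e2]
      rw [e3]
  -- main case split
  by_cases hstar : ∀ j, j < c → ℓ ∣ lam.hook s j + 1
  · -- every hook in row s is ≡ -1 mod ℓ
    have haR : a < s ∨ s + ℓ ≤ a := by
      by_contra hcon
      push_neg at hcon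
      obtain ⟨hc1, hc2⟩ := hcon
      have hb : b < c := by
        rw [YoungDiagram.mem_iff_lt_rowLen, hrowlam a hc1 hc2] at hab
        exact hab
      have hyc : y < c := by
        rw [YoungDiagram.mem_iff_lt_rowLen, hrowlam a hc1 hc2] at hay
        exact hay
      have h1 := hrel a b hc1 hc2 hb
      have h2 := hrel a y hc1 hc2 hyc
      have hb' := hstar b hb
      have hy' := hstar y hyc
      have hdv1 : ℓ ∣ (a - s) + 1 := by
        have h3 : ℓ ∣ lam.hook a b + ((a - s) + 1) := by
          rw [← add_assoc, h1]; exact hb'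
        exact (Nat.dvd_add_right hd1).mp h3
      have h4 : ℓ ∣ lam.hook a y + ((a - s) + 1) := by
        rw [← add_assoc, h2]; exact hy'
      have h5 : ℓ ∣ lam.hook a y := by
        have := Nat.dvd_sub h4 hdv1
        simpa using this
      exact hd2 h5
    have hAb : ℓ ∣ mu.hook a b := (hmod a b hab haR).mpr hd1
    have hAy : ¬ ℓ ∣ mu.hook a y := fun hh => hd2 ((hmod a y hay haR).mp hh)
    by_cases hxR : x < s ∨ s + ℓ ≤ x
    · exact ⟨a, b, y, x, hsub' _ hab, hsub' _ hay, hsub' _ hxb, hAb, hAy,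
        fun hh => hd3 ((hmod x b hxb hxR).mp hh)⟩
    · push_neg at hxR
      obtain ⟨hx1, hx2⟩ := hxR
      have hb : b < c := by
        rw [YoungDiagram.mem_iff_lt_rowLen, hrowlam x hx1 hx2] at hxb
        exact hxb
      by_cases hxs : x = s
      · -- use row s+1 instead
        have hmem1 : (s + 1, b) ∈ lam := by
          rw [YoungDiagram.mem_iff_lt_rowLen, hrowlam (s + 1) (by omega) (by omega)]
          exact hb
        refine ⟨a, b, y, s + 1, hsub' _ hab, hsub' _ hay, hsub' _ hmem1, hAb, hAy, ?_⟩
        rw [hplus1 (s + 1) b (by omega) (by omega) hb]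
        have hr := hrel (s + 1) b (by omega) (by omega) hb
        rw [show s + 1 - s = 1 from by omega] at hr
        rw [hr]
        rw [hxs] at hd3
        exact hd3
      · refine ⟨a, b, y, x, hsub' _ hab, hsub' _ hay, hsub' _ hxb, hAb, hAy, ?_⟩
        rw [hplus1 x b hx1 hx2 hb]
        intro hh
        have h1 := hrel x b hx1 hx2 hb
        have h2 := hstar b hb
        have e : lam.hook s b + 1 = (lam.hook x b + 1) + (x - s) := by omega
        rw [e] at h2
        have hdvd : ℓ ∣ (x - s) := (Nat.dvd_add_right hh).mp h2
        have := Nat.le_of_dvd (by omega) hdvd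
        omega
  · -- there is a non-(-1) hook in row s
    push_neg at hstar
    obtain ⟨j, hj, hjd⟩ := hstar
    have hm1 : (s, c) ∈ mu := (hmem s c).mpr (Or.inr ⟨rfl, le_refl s, by omega⟩)
    have hm2 : (s, j) ∈ lam := by
      rw [YoungDiagram.mem_iff_lt_rowLen, hrowlam s (le_refl s) (by omega)]
      exact hj
    have hm3 : (s + 1, c) ∈ mu := (hmem (s + 1) c).mpr (Or.inr ⟨rfl, by omega, by omega⟩)
    refine ⟨s, c, j, s + 1, hm1, hsub' _ hm2, hm3, ?_, ?_, ?_⟩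
    · have e : mu.hook s c = ℓ := by
        simp only [YoungDiagram.hook, hrowmu s (le_refl s) (by omega), hcolc]
        omega
      rw [e]
    · rw [hplus1 s j (le_refl s) (by omega) hj]
      exact hjd
    · have e : mu.hook (s + 1) c = ℓ - 1 := by
        simp only [YoungDiagram.hook, hrowmu (s + 1) (by omega) (by omega), hcolc]
        omega
      rw [e]
      intro hh
      have := Nat.le_of_dvd (by omega) hh
      omega
end

section
/- Let ℓ > 2 be an integer and let μ be a partition that has an ℓ-rim hook which is neither horizontal nor vertical. Then μ is not an (ℓ,0)-JM partition. -/
/-- Two boxes are adjacent if they share an edge. -/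
def CellAdj (u v : ℕ × ℕ) : Prop :=
  (u.1 = v.1 ∧ (u.2 + 1 = v.2 ∨ v.2 + 1 = u.2)) ∨
  (u.2 = v.2 ∧ (u.1 + 1 = v.1 ∨ v.1 + 1 = u.1))

/-- A set of boxes is connected if any two of its boxes are joined by a chain of boxes of the
set, successive boxes sharing an edge. -/
def ConnectedSet (R : Finset (ℕ × ℕ)) : Prop :=
  ∀ u ∈ R, ∀ v ∈ R,
    Relation.ReflTransGen (fun x y : ℕ × ℕ => x ∈ R ∧ y ∈ R ∧ CellAdj x y) u v

/-- A set of boxes contains no 2×2 square. -/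
def NoSquare (R : Finset (ℕ × ℕ)) : Prop :=
  ¬ ∃ i j : ℕ, (i, j) ∈ R ∧ (i + 1, j) ∈ R ∧ (i, j + 1) ∈ R ∧ (i + 1, j + 1) ∈ R

/-- `R` is an `ℓ`-rim hook of `μ`: a connected set of `ℓ` boxes of `μ` with no 2×2 square,
whose removal from `μ` leaves the Young diagram of a partition. -/
def IsRimHook (ℓ : ℕ) (μ : YoungDiagram) (R : Finset (ℕ × ℕ)) : Prop :=
  R ⊆ μ.cells ∧ R.card = ℓ ∧ (∃ ν : YoungDiagram, ν.cells = μ.cells \ R) ∧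
    ConnectedSet R ∧ NoSquare R

/-- A set of boxes all lying in one row. -/
def Horizontal (R : Finset (ℕ × ℕ)) : Prop := ∃ r : ℕ, ∀ c ∈ R, c.1 = r

/-- A set of boxes all lying in one column. -/
def Vertical (R : Finset (ℕ × ℕ)) : Prop := ∃ r : ℕ, ∀ c ∈ R, c.2 = r

/-- Two sets of boxes are adjacent if some box of one shares an edge with some box of the
other. -/
def AdjSets (R S : Finset (ℕ × ℕ)) : Prop := ∃ u ∈ R, ∃ v ∈ S, CellAdj u v

/-- A partition having an `ℓ`-rim hook that is neither horizontal nor vertical is not an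
`(ℓ,0)`-JM partition. -/
theorem not_JM_of_nonHorizontal_nonVertical_rim_hook (ℓ : ℕ) (hℓ : 2 < ℓ) (mu : YoungDiagram)
    (h : ∃ R : Finset (ℕ × ℕ), IsRimHook ℓ mu R ∧ ¬ Horizontal R ∧ ¬ Vertical R) :
    ¬ IsJM ℓ mu := by
  obtain ⟨R, ⟨hsub, hcard, ⟨ν, hν⟩, hconn, hnsq⟩, hnh, hnv⟩ := h
  intro hJM
  -- membership in R described by row lengths
  have hcells : ∀ p : ℕ × ℕ, p ∈ ν ↔ p ∈ mu ∧ p ∉ R := by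
    intro p
    rw [← YoungDiagram.mem_cells, hν, Finset.mem_sdiff, YoungDiagram.mem_cells]
  have memR : ∀ r c : ℕ, (r, c) ∈ R ↔ ν.rowLen r ≤ c ∧ c < mu.rowLen r := by
    intro r c
    have h1 : (r, c) ∈ R ↔ (r, c) ∈ mu ∧ (r, c) ∉ ν := by
      constructor
      · intro hr
        have hmu : (r, c) ∈ mu := by
          rw [← YoungDiagram.mem_cells]; exact hsub hr
        exact ⟨hmu, fun hn => ((hcells _).mp hn).2 hr⟩
      · rintro ⟨hmu, hn⟩
        by_contra hR
        exact hn ((hcells _).mpr ⟨hmu, hR⟩)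
    rw [h1, YoungDiagram.mem_iff_lt_rowLen, YoungDiagram.mem_iff_lt_rowLen]
    omega
  have hne : R.Nonempty := Finset.card_pos.mp (by omega)
  have hrowsne : (R.image Prod.fst).Nonempty := hne.image _
  set a := (R.image Prod.fst).min' hrowsne with ha_def
  set x := (R.image Prod.fst).max' hrowsne with hx_def
  obtain ⟨u, hu, hu1⟩ : ∃ u ∈ R, u.1 = a := by
    obtain ⟨u, hu, h1⟩ := Finset.mem_image.mp ((R.image Prod.fst).min'_mem hrowsne)
    exact ⟨u, hu, h1⟩
  obtain ⟨v, hv, hv1⟩ : ∃ v ∈ R, v.1 = x := by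
    obtain ⟨v, hv, h1⟩ := Finset.mem_image.mp ((R.image Prod.fst).max'_mem hrowsne)
    exact ⟨v, hv, h1⟩
  have hbound : ∀ p ∈ R, a ≤ p.1 ∧ p.1 ≤ x := by
    intro p hp
    exact ⟨Finset.min'_le _ _ (Finset.mem_image_of_mem _ hp),
      Finset.le_max' _ _ (Finset.mem_image_of_mem _ hp)⟩
  have hax : a ≤ x := (hbound u hu).2.trans_eq' hu1
  -- every row between a and x meets R
  have hrow : ∀ r, a ≤ r → r ≤ x → ∃ c, (r, c) ∈ R := by
    intro r har hrx
    have chain := hconn u hu v hv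
    have key : ∀ w, Relation.ReflTransGen
        (fun p q : ℕ × ℕ => p ∈ R ∧ q ∈ R ∧ CellAdj p q) u w →
        ∀ s, a ≤ s → s ≤ w.1 → ∃ c, (s, c) ∈ R := by
      intro w hw
      induction hw with
      | refl =>
        intro s h1 h2
        have : s = a := le_antisymm (hu1 ▸ h2) h1
        exact ⟨u.2, by rw [this, ← hu1]; exact hu⟩
      | @tail p q hup hpq ih =>
        intro s h1 h2
        rcases le_or_gt s p.1 with hsp | hsp
        · exact ih s h1 hsp
        · have hq1 : q.1 ≤ p.1 + 1 := by
            rcases hpq.2.2 with ⟨he, _⟩ | ⟨_, he | he⟩ <;> omega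
          have : s = q.1 := by omega
          exact ⟨q.2, by rw [this]; exact hpq.2.1⟩
    exact key v chain r har (hv1 ▸ hrx)
  -- rows outside [a,x] don't meet R
  have hνle : ∀ r, ν.rowLen r ≤ mu.rowLen r := by
    intro r
    by_contra hlt
    push_neg at hlt
    have : (r, mu.rowLen r) ∈ ν := YoungDiagram.mem_iff_lt_rowLen.mpr hlt
    have : (r, mu.rowLen r) ∈ mu := ((hcells _).mp this).1
    exact absurd (YoungDiagram.mem_iff_lt_rowLen.mp this) (lt_irrefl _)
  have hrowempty : ∀ r, r < a ∨ x < r → ν.rowLen r = mu.rowLen r := by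
    intro r hr
    by_contra hne'
    have hlt : ν.rowLen r < mu.rowLen r := lt_of_le_of_ne (hνle r) hne'
    have hmem : (r, ν.rowLen r) ∈ R := (memR r _).mpr ⟨le_refl _, hlt⟩
    have := hbound _ hmem
    simp at this
    omega
  have hrowne : ∀ r, a ≤ r → r ≤ x → ν.rowLen r < mu.rowLen r := by
    intro r h1 h2
    obtain ⟨c, hc⟩ := hrow r h1 h2
    have := (memR r c).mp hc
    omega
  -- consecutive rows overlap in exactly one column
  have hstep : ∀ r, a ≤ r → r < x → mu.rowLen (r + 1) = ν.rowLen r + 1 := by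
    intro r h1 h2
    have hle1 : mu.rowLen (r + 1) ≤ ν.rowLen r + 1 := by
      by_contra hgt
      push_neg at hgt
      set c := ν.rowLen r with hc
      have hmra : mu.rowLen (r+1) ≤ mu.rowLen r := mu.rowLen_anti r (r+1) (by omega)
      have hνa : ν.rowLen (r+1) ≤ ν.rowLen r := ν.rowLen_anti r (r+1) (by omega)
      exact hnsq ⟨r, c,
        (memR r c).mpr ⟨le_refl _, by omega⟩,
        (memR (r+1) c).mpr ⟨by omega, by omega⟩,
        (memR r (c+1)).mpr ⟨by omega, by omega⟩,
        (memR (r+1) (c+1)).mpr ⟨by omega, by omega⟩⟩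
    have hgt1 : ν.rowLen r < mu.rowLen (r + 1) := by
      by_contra hle'
      push_neg at hle'
      obtain ⟨cu, hcu⟩ := hrow r h1 (le_of_lt h2)
      obtain ⟨cv, hcv⟩ := hrow (r+1) (by omega) h2
      have chain := hconn (r, cu) hcu (r+1, cv) hcv
      have key : ∀ w, Relation.ReflTransGen
          (fun p q : ℕ × ℕ => p ∈ R ∧ q ∈ R ∧ CellAdj p q) (r, cu) w → w.1 ≤ r := by
        intro w hw
        induction hw with
        | refl => exact le_refl r
        | @tail p q hup hpq ih =>
          rcases hpq.2.2 with ⟨he, _⟩ | ⟨he2, he | he⟩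
          · omega
          · -- q.1 = p.1 + 1, vertical step down
            by_contra hqr
            push_neg at hqr
            have hp1 : p.1 = r := by omega
            have hq1 : q.1 = r + 1 := by omega
            have hpmem := (memR p.1 p.2).mp (by rw [Prod.mk.eta]; exact hpq.1)
            have hqmem := (memR q.1 q.2).mp (by rw [Prod.mk.eta]; exact hpq.2.1)
            rw [hp1] at hpmem
            rw [hq1] at hqmem
            omega
          · omega
      have := key (r+1, cv) chain
      simp at this
    omega
  -- antitonicity facts
  have hνanti : ∀ r s, r ≤ s → ν.rowLen s ≤ ν.rowLen r := fun r s hr => ν.rowLen_anti r s hr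
  have hμanti : ∀ r s, r ≤ s → mu.rowLen s ≤ mu.rowLen r := fun r s hr => mu.rowLen_anti r s hr
  set b := ν.rowLen x with hb_def
  set y := mu.rowLen a - 1 with hy_def
  have hrownea : ν.rowLen a < mu.rowLen a := hrowne a (le_refl a) hax
  have hrownex : ν.rowLen x < mu.rowLen x := hrowne x hax (le_refl x)
  have hxbR : (x, b) ∈ R := (memR x b).mpr ⟨le_refl _, hrownex⟩
  have hayR : (a, y) ∈ R := (memR a y).mpr ⟨by omega, by omega⟩
  -- bounds on columns of R
  have hcolbound : ∀ p ∈ R, b ≤ p.2 ∧ p.2 ≤ y := by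
    intro p hp
    have h1 := (memR p.1 p.2).mp (by rw [Prod.mk.eta]; exact hp)
    have h2 := hbound p hp
    have h3 := hνanti p.1 x h2.2
    have h4 := hμanti a p.1 h2.1
    omega
  -- a < x and b < y
  have haxlt : a < x := by
    rcases lt_or_eq_of_le hax with h' | h'
    · exact h'
    · exfalso
      exact hnh ⟨a, fun p hp => by
        have := hbound p hp; omega⟩
  have hbylt : b < y := by
    have hby : b ≤ y := (hcolbound _ hayR).1
    rcases lt_or_eq_of_le hby with h' | h'
    · exact h'
    · exfalso
      exact hnv ⟨b, fun p hp => by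
        have := hcolbound p hp; omega⟩
  -- compute the cardinality of R
  have hReq : R = (Finset.Icc a x).biUnion
      (fun r => (Finset.Ico (ν.rowLen r) (mu.rowLen r)).image (fun c => (r, c))) := by
    ext ⟨r, c⟩
    simp only [Finset.mem_biUnion, Finset.mem_Icc, Finset.mem_image, Finset.mem_Ico]
    constructor
    · intro hp
      have h1 := (memR r c).mp hp
      have h2 := hbound _ hp
      exact ⟨r, ⟨h2.1, h2.2⟩, c, h1, rfl⟩
    · rintro ⟨r', ⟨h1, h2⟩, c', hc', heq⟩
      obtain ⟨rfl, rfl⟩ := Prod.mk.injEq .. ▸ heq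
      exact (memR r' c').mpr hc'
  have hcard2 : R.card = ∑ r ∈ Finset.Icc a x, (mu.rowLen r - ν.rowLen r) := by
    rw [hReq, Finset.card_biUnion]
    · apply Finset.sum_congr rfl
      intro r _
      rw [Finset.card_image_of_injective _ (fun c1 c2 hc => (Prod.mk.injEq .. ▸ hc).2),
        Nat.card_Ico]
    · intro r _ s _ hrs
      apply Finset.disjoint_left.mpr
      intro p hp hq
      simp only [Finset.mem_image, Finset.mem_Ico] at hp hq
      obtain ⟨c1, _, rfl⟩ := hp
      obtain ⟨c2, _, heq⟩ := hq
      exact hrs ((Prod.mk.injEq .. ▸ heq).1.symm)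
  have hsum : ∀ k, a + k ≤ x →
      ∑ r ∈ Finset.Icc a (a + k), (mu.rowLen r - ν.rowLen r)
        = (mu.rowLen a - ν.rowLen (a + k)) + k := by
    intro k
    induction k with
    | zero => intro _; simp
    | succ n ih =>
      intro hk
      have hIcc : Finset.Icc a (a + (n+1)) = insert (a + n + 1) (Finset.Icc a (a + n)) := by
        ext t
        simp only [Finset.mem_Icc, Finset.mem_insert]
        omega
      rw [hIcc, Finset.sum_insert (by simp [Finset.mem_Icc])]
      rw [ih (by omega)]
      have h1 : mu.rowLen (a + n + 1) = ν.rowLen (a + n) + 1 :=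
        hstep (a + n) (by omega) (by omega)
      have h2 : ν.rowLen (a + n + 1) ≤ ν.rowLen (a + n) := hνanti _ _ (by omega)
      have h3 : ν.rowLen (a + n) < mu.rowLen (a + n) := hrowne _ (by omega) (by omega)
      have h4 : mu.rowLen (a + n) ≤ mu.rowLen a := hμanti _ _ (by omega)
      rw [show a + (n + 1) = a + n + 1 from by omega]
      omega
  have hℓeq : ℓ = (mu.rowLen a - b) + (x - a) := by
    have := hsum (x - a) (by omega)
    rw [show a + (x - a) = x by omega] at this
    rw [← hcard, hcard2, this]
  -- column lengths
  have hcolb : mu.colLen b = x + 1 := by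
    have hxb : (x, b) ∈ mu := by
      rw [← YoungDiagram.mem_cells]; exact hsub hxbR
    have h1 : x < mu.colLen b := YoungDiagram.mem_iff_lt_colLen.mp hxb
    have h2 : ¬ (x + 1 < mu.colLen b) := by
      intro hlt
      have : (x + 1, b) ∈ mu := YoungDiagram.mem_iff_lt_colLen.mpr hlt
      have h3 : b < mu.rowLen (x + 1) := YoungDiagram.mem_iff_lt_rowLen.mp this
      have h4 : ν.rowLen (x + 1) = mu.rowLen (x + 1) := hrowempty _ (by omega)
      have h5 : ν.rowLen (x + 1) ≤ ν.rowLen x := hνanti _ _ (by omega)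
      omega
    omega
  have hcoly : mu.colLen y ≤ x + 1 := by
    by_contra hlt
    push_neg at hlt
    have : (x + 1, y) ∈ mu := YoungDiagram.mem_iff_lt_colLen.mpr hlt
    have h3 : y < mu.rowLen (x + 1) := YoungDiagram.mem_iff_lt_rowLen.mp this
    have h4 : ν.rowLen (x + 1) = mu.rowLen (x + 1) := hrowempty _ (by omega)
    have h5 : ν.rowLen (x + 1) ≤ ν.rowLen x := hνanti _ _ (by omega)
    omega
  -- memberships in mu
  have haymu : (a, y) ∈ mu := YoungDiagram.mem_iff_lt_rowLen.mpr (by omega)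
  have habmu : (a, b) ∈ mu := by
    apply YoungDiagram.mem_iff_lt_rowLen.mpr
    have := hνanti a x hax
    omega
  have hxbmu : (x, b) ∈ mu := YoungDiagram.mem_iff_lt_rowLen.mpr (by omega)
  have hcolya : a < mu.colLen y := YoungDiagram.mem_iff_lt_colLen.mp haymu
  -- hook values
  have hhab : mu.hook a b = ℓ := by
    unfold YoungDiagram.hook
    rw [hcolb]
    have := hνanti a x hax
    omega
  have hhay : 0 < mu.hook a y ∧ mu.hook a y < ℓ := by
    unfold YoungDiagram.hook
    constructor
    · omega
    · have h1 : mu.rowLen a - y = 1 := by omega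
      omega
  have hhxb : 0 < mu.hook x b ∧ mu.hook x b < ℓ := by
    unfold YoungDiagram.hook
    rw [hcolb]
    have h1 : b < mu.rowLen x := hrownex.trans_le' (le_refl _) |>.trans_le' (le_refl _)
    have h2 : mu.rowLen x ≤ mu.rowLen a := hμanti a x hax
    omega
  exact hJM ⟨a, b, y, x, habmu, haymu, hxbmu,
    hhab ▸ dvd_refl ℓ,
    fun hd => absurd (Nat.le_of_dvd hhay.1 hd) (by omega),
    fun hd => absurd (Nat.le_of_dvd hhxb.1 hd) (by omega)⟩
end

section
/- Let ℓ > 2 be an integer and let λ be an (ℓ,0)-JM partition. Then there do not exist a removable box of λ and two distinct addable boxes of λ all having the same residue modulo ℓ. -/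
/-- `c` is a removable box of `μ`. -/
def Removable (μ : YoungDiagram) (c : ℕ × ℕ) : Prop :=
  c ∈ μ ∧ ∃ ν : YoungDiagram, ν.cells = μ.cells \ {c}

/-- `c` is an addable box of `μ`. -/
def Addable (μ : YoungDiagram) (c : ℕ × ℕ) : Prop :=
  c ∉ μ ∧ ∃ ν : YoungDiagram, ν.cells = insert c μ.cells

/-- Two positions have the same residue modulo `ℓ`, i.e. `(col − row) mod ℓ` agree. -/
def SameRes (ℓ : ℕ) (u v : ℕ × ℕ) : Prop :=
  ((u.2 : ℤ) - u.1) ≡ ((v.2 : ℤ) - v.1) [ZMOD (ℓ : ℤ)]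

lemma rem_spec (μ : YoungDiagram) {a b : ℕ} (h : Removable μ (a, b)) :
    μ.rowLen a = b + 1 ∧ μ.colLen b = a + 1 := by
  obtain ⟨hm, ν, hν⟩ := h
  have key : ∀ i j : ℕ, a ≤ i → b ≤ j → (i, j) ≠ (a, b) → (i, j) ∈ μ → False := by
    intro i j hi hj hne hmem
    have h1 : (i, j) ∈ ν := by
      rw [← YoungDiagram.mem_cells, hν, Finset.mem_sdiff]
      exact ⟨(YoungDiagram.mem_cells _).2 hmem, by simpa using hne⟩
    have h2 : (a, b) ∈ ν := ν.up_left_mem hi hj h1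
    rw [← YoungDiagram.mem_cells, hν, Finset.mem_sdiff] at h2
    simp at h2
  have hr : (a, b + 1) ∉ μ := fun hmem => key a (b + 1) le_rfl (Nat.le_succ b) (by simp) hmem
  have hc : (a + 1, b) ∉ μ := fun hmem => key (a + 1) b (Nat.le_succ a) le_rfl (by simp) hmem
  rw [YoungDiagram.mem_iff_lt_rowLen] at hr
  rw [YoungDiagram.mem_iff_lt_colLen] at hc
  have h1 := YoungDiagram.mem_iff_lt_rowLen.1 hm
  have h2 := YoungDiagram.mem_iff_lt_colLen.1 hm
  omega

lemma add_spec (μ : YoungDiagram) {c d : ℕ} (h : Addable μ (c, d)) :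
    μ.rowLen c = d ∧ μ.colLen d = c := by
  obtain ⟨hm, ν, hν⟩ := h
  have hcd : (c, d) ∈ ν := by
    rw [← YoungDiagram.mem_cells, hν]; exact Finset.mem_insert_self _ _
  have key : ∀ i j : ℕ, i ≤ c → j ≤ d → (i, j) ≠ (c, d) → (i, j) ∈ μ := by
    intro i j hi hj hne
    have h1 : (i, j) ∈ ν := ν.up_left_mem hi hj hcd
    rw [← YoungDiagram.mem_cells, hν, Finset.mem_insert] at h1
    rcases h1 with h1 | h1
    · exact absurd h1 hne
    · exact (YoungDiagram.mem_cells _).1 h1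
  constructor
  · refine le_antisymm ?_ ?_
    · by_contra h'
      exact hm (YoungDiagram.mem_iff_lt_rowLen.2 (by omega))
    · by_contra h'
      have := key c (μ.rowLen c) le_rfl (by omega) (by simp; omega)
      rw [YoungDiagram.mem_iff_lt_rowLen] at this; omega
  · refine le_antisymm ?_ ?_
    · by_contra h'
      exact hm (YoungDiagram.mem_iff_lt_colLen.2 (by omega))
    · by_contra h'
      have := key (μ.colLen d) d (by omega) le_rfl (by simp; omega)
      rw [YoungDiagram.mem_iff_lt_colLen] at this; omega

lemma key_lemma (ℓ : ℕ) (hℓ : 2 < ℓ) (μ : YoungDiagram) (hJM : IsJM ℓ μ)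
    (a b c d c' d' : ℕ)
    (hr1 : μ.rowLen a = b + 1) (hr2 : μ.colLen b = a + 1)
    (ha1 : μ.rowLen c = d) (ha2 : μ.colLen d = c)
    (hb1 : μ.rowLen c' = d') (hb2 : μ.colLen d' = c')
    (D1 : (ℓ : ℤ) ∣ ((d : ℤ) - c) - ((b : ℤ) - a))
    (D2 : (ℓ : ℤ) ∣ ((d' : ℤ) - c') - ((b : ℤ) - a))
    (hcc : c < c') (hca : c ≠ a) (hc'a : c' ≠ a) : False := by
  -- d' < d in all cases
  have hdd' : d' < d := by
    have hle : d' ≤ d := by rw [← ha1, ← hb1]; exact μ.rowLen_anti c c' hcc.le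
    rcases eq_or_lt_of_le hle with he | h
    · rw [he] at hb2; omega
    · exact h
  -- removable corner has hook 1
  have e0 : μ.hook a b = 1 := by simp only [YoungDiagram.hook, hr1, hr2]; omega
  have ndvd0 : ¬ ℓ ∣ μ.hook a b := by
    rw [e0]; intro hd; have := Nat.le_of_dvd one_pos hd; omega
  have cast_dvd : ∀ n : ℕ, (ℓ : ℤ) ∣ (n : ℤ) → ℓ ∣ n := fun n h =>
    Int.natCast_dvd_natCast.1 h
  have ndvd_of : ∀ n : ℕ, (ℓ : ℤ) ∣ (n : ℤ) + 1 → ¬ ℓ ∣ n := by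
    intro n h1 h2
    have h3 : (ℓ : ℤ) ∣ (n : ℤ) := Int.natCast_dvd_natCast.2 h2
    have h4 : (ℓ : ℤ) ∣ 1 := by
      have := dvd_sub h1 h3; simpa using this
    have := Int.le_of_dvd one_pos h4
    omega
  rcases lt_or_gt_of_ne hca with h1 | h1
  · -- c < a : the first addable box is above the removable box
    have hbd : b < d := by have := μ.rowLen_anti c a h1.le; omega
    have m1 : (c, b) ∈ μ := YoungDiagram.mem_iff_lt_rowLen.2 (by omega)
    have m2 : (c, d') ∈ μ := YoungDiagram.mem_iff_lt_rowLen.2 (by omega)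
    have m3 : (a, b) ∈ μ := YoungDiagram.mem_iff_lt_rowLen.2 (by omega)
    have e1 : (μ.hook c b : ℤ) = ((d : ℤ) - c) - ((b : ℤ) - a) := by
      simp only [YoungDiagram.hook, ha1, hr2]; omega
    have dvd1 : ℓ ∣ μ.hook c b := cast_dvd _ (e1 ▸ D1)
    have e2 : (μ.hook c d' : ℤ) + 1 =
        (((d : ℤ) - c) - ((b : ℤ) - a)) - (((d' : ℤ) - c') - ((b : ℤ) - a)) := by
      simp only [YoungDiagram.hook, ha1, hb2]; omega
    have ndvd2 : ¬ ℓ ∣ μ.hook c d' := ndvd_of _ (by rw [e2]; exact dvd_sub D1 D2)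
    exact hJM ⟨c, b, d', a, m1, m2, m3, dvd1, ndvd2, ndvd0⟩
  · -- a < c : both addable boxes are below the removable box
    have hd_le : d ≤ b := by
      have hnm : (a + 1, b) ∉ μ := by
        rw [YoungDiagram.mem_iff_lt_colLen]; omega
      have h2 : μ.rowLen (a + 1) ≤ b := by
        by_contra h'
        exact hnm (YoungDiagram.mem_iff_lt_rowLen.2 (by omega))
      have := μ.rowLen_anti (a + 1) c h1
      omega
    have m1 : (a, d') ∈ μ := YoungDiagram.mem_iff_lt_rowLen.2 (by omega)
    have m2 : (a, b) ∈ μ := YoungDiagram.mem_iff_lt_rowLen.2 (by omega)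
    have m3 : (c, d') ∈ μ := YoungDiagram.mem_iff_lt_rowLen.2 (by omega)
    have e1 : (μ.hook a d' : ℤ) = ((b : ℤ) - a) - ((d' : ℤ) - c') := by
      simp only [YoungDiagram.hook, hr1, hb2]; omega
    have dvd1 : ℓ ∣ μ.hook a d' := by
      refine cast_dvd _ ?_
      rw [e1]
      have := dvd_neg.2 D2
      simpa [neg_sub] using this
    have e3 : (μ.hook c d' : ℤ) + 1 =
        (((d : ℤ) - c) - ((b : ℤ) - a)) - (((d' : ℤ) - c') - ((b : ℤ) - a)) := by
      simp only [YoungDiagram.hook, ha1, hb2]; omega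
    have ndvd3 : ¬ ℓ ∣ μ.hook c d' := ndvd_of _ (by rw [e3]; exact dvd_sub D1 D2)
    exact hJM ⟨a, d', b, c, m1, m2, m3, dvd1, ndvd0, ndvd3⟩

/-- An `(ℓ,0)`-JM partition cannot have a removable box and two distinct addable boxes all of
the same residue. -/
theorem JM_no_removable_and_two_addable (ℓ : ℕ) (hℓ : 2 < ℓ) (lam : YoungDiagram)
    (h : IsJM ℓ lam) :
    ¬ ∃ x p q : ℕ × ℕ, Removable lam x ∧ Addable lam p ∧ Addable lam q ∧ p ≠ q ∧
        SameRes ℓ x p ∧ SameRes ℓ x q := by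
  rintro ⟨⟨a, b⟩, ⟨c, d⟩, ⟨c', d'⟩, hrem, hp, hq, hne, hres1, hres2⟩
  obtain ⟨hr1, hr2⟩ := rem_spec lam hrem
  obtain ⟨ha1, ha2⟩ := add_spec lam hp
  obtain ⟨hb1, hb2⟩ := add_spec lam hq
  have D1 : (ℓ : ℤ) ∣ ((d : ℤ) - c) - ((b : ℤ) - a) := Int.ModEq.dvd hres1
  have D2 : (ℓ : ℤ) ∣ ((d' : ℤ) - c') - ((b : ℤ) - a) := Int.ModEq.dvd hres2
  have hsmall : ¬ (ℓ : ℤ) ∣ 1 := by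
    intro hd
    have := Int.le_of_dvd one_pos hd
    omega
  have hca : c ≠ a := by
    rintro rfl
    rw [hr1] at ha1
    apply hsmall
    have : ((d : ℤ) - c) - ((b : ℤ) - c) = 1 := by omega
    rwa [this] at D1
  have hc'a : c' ≠ a := by
    rintro rfl
    rw [hr1] at hb1
    apply hsmall
    have : ((d' : ℤ) - c') - ((b : ℤ) - c') = 1 := by omega
    rwa [this] at D2
  have hcc' : c ≠ c' := by
    rintro rfl
    rw [ha1] at hb1
    exact hne (by rw [hb1])
  rcases lt_or_gt_of_ne hcc' with h' | h'
  · exact key_lemma ℓ hℓ lam h a b c d c' d' hr1 hr2 ha1 ha2 hb1 hb2 D1 D2 h' hca hc'a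
  · exact key_lemma ℓ hℓ lam h a b c' d' c d hr1 hr2 hb1 hb2 ha1 ha2 D2 D1 h' hc'a hca
end

section
/- Let ℓ > 2 be an integer and let λ be an (ℓ,0)-JM partition. Then there do not exist a removable box (a,b) of λ and an addable box (c,d) of λ lying on the same ladder with (a,b) above (c,d), i.e. with c − a = (ℓ−1)(b − d) and a < c. -/
/-- An `(ℓ,0)`-JM partition has no ladder with a removable box above an addable box:
there are no removable `(a,b)` and addable `(c,d)` with `c − a = (ℓ−1)(b − d)` and `a < c`. -/
theorem JM_no_removable_above_addable_in_ladder (ℓ : ℕ) (hℓ : 2 < ℓ) (lam : YoungDiagram)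
    (h : IsJM ℓ lam) :
    ¬ ∃ a b c d : ℕ, Removable lam (a, b) ∧ Addable lam (c, d) ∧
        (c : ℤ) - a = ((ℓ : ℤ) - 1) * ((b : ℤ) - d) ∧ a < c := by
  rintro ⟨a, b, c, d, ⟨hab, ν, hν⟩, ⟨hcd, ρ, hρ⟩, hlad, hac⟩
  obtain ⟨m, rfl⟩ : ∃ m, ℓ = m + 3 := ⟨ℓ - 3, by omega⟩
  have hmem_ν : ∀ p : ℕ × ℕ, p ∈ ν ↔ p ∈ lam ∧ p ≠ (a, b) := by
    intro p
    rw [← YoungDiagram.mem_cells, hν, Finset.mem_sdiff, Finset.mem_singleton,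
      YoungDiagram.mem_cells]
  have hmem_ρ : ∀ p : ℕ × ℕ, p ∈ ρ ↔ p = (c, d) ∨ p ∈ lam := by
    intro p
    rw [← YoungDiagram.mem_cells, hρ, Finset.mem_insert, YoungDiagram.mem_cells]
  have hrow_a : lam.rowLen a = b + 1 := by
    have h1 : b < lam.rowLen a := YoungDiagram.mem_iff_lt_rowLen.1 hab
    have h2 : (a, b + 1) ∉ lam := by
      intro hm
      have h3 : (a, b) ∈ ν :=
        ν.up_left_mem le_rfl (by omega) ((hmem_ν _).2 ⟨hm, by simp⟩)
      exact absurd rfl ((hmem_ν _).1 h3).2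
    rw [YoungDiagram.mem_iff_lt_rowLen] at h2
    omega
  have hcol_b : lam.colLen b = a + 1 := by
    have h1 : a < lam.colLen b := YoungDiagram.mem_iff_lt_colLen.1 hab
    have h2 : (a + 1, b) ∉ lam := by
      intro hm
      have h3 : (a, b) ∈ ν :=
        ν.up_left_mem (by omega) le_rfl ((hmem_ν _).2 ⟨hm, by simp⟩)
      exact absurd rfl ((hmem_ν _).1 h3).2
    rw [YoungDiagram.mem_iff_lt_colLen] at h2
    omega
  have hcol_d : lam.colLen d = c := by
    have h2 : ¬ c < lam.colLen d := fun hm => hcd (YoungDiagram.mem_iff_lt_colLen.2 hm)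
    have h1 : c - 1 < lam.colLen d := by
      have hcd' : (c, d) ∈ ρ := (hmem_ρ _).2 (Or.inl rfl)
      have h3 : (c - 1, d) ∈ ρ := ρ.up_left_mem (by omega) le_rfl hcd'
      have h4 : (c - 1, d) ∈ lam := by
        rcases (hmem_ρ _).1 h3 with h5 | h5
        · exfalso
          simp only [Prod.mk.injEq] at h5
          omega
        · exact h5
      exact YoungDiagram.mem_iff_lt_colLen.1 h4
    omega
  have hbd : d < b := by
    rcases lt_or_ge d b with h1 | h1
    · exact h1
    · exfalso
      have h2 : ((b : ℤ) - d) ≤ 0 := by omega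
      have h3 : (0 : ℤ) < (c : ℤ) - a := by omega
      have hl1 : (0 : ℤ) ≤ ((m : ℤ) + 3) - 1 := by omega
      have h4 : (((m : ℕ) + 3 : ℕ) : ℤ) - 1 = ((m : ℤ) + 3) - 1 := by push_cast; ring
      rw [h4] at hlad
      have h5 : (((m : ℤ) + 3) - 1) * ((b : ℤ) - d) ≤ 0 :=
        mul_nonpos_of_nonneg_of_nonpos hl1 h2
      linarith
  have hca : c = a + (m + 2) * (b - d) := by
    zify [Nat.le_of_lt hbd]
    push_cast at hlad
    linarith
  have hmemcol : ∀ i, i < c → (i, d) ∈ lam := fun i hi =>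
    YoungDiagram.mem_iff_lt_colLen.2 (by omega)
  have hrowgt : ∀ i, i < c → d < lam.rowLen i := fun i hi =>
    YoungDiagram.mem_iff_lt_rowLen.1 (hmemcol i hi)
  have hook_ad : lam.hook a d = (m + 3) * (b - d) := by
    have he : (m + 3) * (b - d) = (m + 2) * (b - d) + (b - d) := by ring
    unfold YoungDiagram.hook
    rw [hrow_a, hcol_d]
    omega
  have hook_ab : lam.hook a b = 1 := by
    unfold YoungDiagram.hook
    rw [hrow_a, hcol_b]
    omega
  have hx : ∃ x, x < c ∧ ¬ (m + 3) ∣ lam.hook x d := by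
    by_contra hcon
    push_neg at hcon
    have hdvd : ∀ i, i < c → (m + 3) ∣ lam.hook i d := fun i hi => hcon i hi
    have hstep : ∀ i, i + 1 < c → lam.hook (i + 1) d + (m + 3) ≤ lam.hook i d := by
      intro i hi
      have h1 : d < lam.rowLen i := hrowgt i (by omega)
      have h2 : d < lam.rowLen (i + 1) := hrowgt (i + 1) hi
      have h3 : lam.rowLen (i + 1) ≤ lam.rowLen i := lam.rowLen_anti i (i + 1) (by omega)
      have h4 : lam.hook (i + 1) d < lam.hook i d := by
        unfold YoungDiagram.hook; omega
      obtain ⟨k1, hk1⟩ := hdvd i (by omega)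
      obtain ⟨k2, hk2⟩ := hdvd (i + 1) hi
      have h5 : k2 < k1 := by
        by_contra h6
        push_neg at h6
        have := Nat.mul_le_mul_left (m + 3) h6
        omega
      have h7 := Nat.mul_le_mul_left (m + 3) (show k2 + 1 ≤ k1 by omega)
      rw [Nat.mul_add, Nat.mul_one] at h7
      omega
    have htel : ∀ n i, i + n < c → lam.hook (i + n) d + (m + 3) * n ≤ lam.hook i d := by
      intro n
      induction n with
      | zero => intro i _; simp
      | succ k ih =>
        intro i hi
        have h1 := ih (i + 1) (by omega)
        have h2 := hstep i (by omega)
        have h3 : i + 1 + k = i + (k + 1) := by omega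
        rw [h3] at h1
        have h4 : (m + 3) * (k + 1) = (m + 3) * k + (m + 3) := by ring
        omega
    have hfin := htel (c - 1 - a) a (by omega)
    have hlast : (m + 3) ≤ lam.hook (a + (c - 1 - a)) d := by
      have h1 : a + (c - 1 - a) = c - 1 := by omega
      have h2 : 0 < lam.hook (c - 1) d := by
        have := hrowgt (c - 1) (by omega)
        unfold YoungDiagram.hook; omega
      obtain ⟨k, hk⟩ := hdvd (c - 1) (by omega)
      rw [h1]
      rcases Nat.eq_zero_or_pos k with hk0 | hk0
      · rw [hk0, Nat.mul_zero] at hk; omega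
      · calc m + 3 = (m + 3) * 1 := by ring
          _ ≤ (m + 3) * k := Nat.mul_le_mul_left (m + 3) hk0
          _ = _ := hk.symm
    rw [hook_ad] at hfin
    have h7 : (m + 3) * (c - 1 - a) + (m + 3) ≤ (m + 3) * (b - d) := by omega
    have h8 : c - 1 - a + 1 = (m + 2) * (b - d) := by omega
    have h9 : (m + 3) * ((m + 2) * (b - d)) ≤ (m + 3) * (b - d) := by
      calc (m + 3) * ((m + 2) * (b - d)) = (m + 3) * (c - 1 - a + 1) := by rw [h8]
        _ = (m + 3) * (c - 1 - a) + (m + 3) := by ring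
        _ ≤ (m + 3) * (b - d) := h7
    have h10 : 0 < b - d := by omega
    have h11 : b - d + 1 ≤ (m + 2) * (b - d) := by
      have h12 := Nat.mul_le_mul_right (b - d) (show 2 ≤ m + 2 by omega)
      omega
    have h13 := Nat.mul_le_mul_left (m + 3) h11
    have h14 : (m + 3) * (b - d + 1) = (m + 3) * (b - d) + (m + 3) := by ring
    omega
  obtain ⟨x, hxc, hxd⟩ := hx
  refine h ⟨a, d, b, x, hmemcol a (by omega), hab, hmemcol x hxc, ?_, ?_, hxd⟩
  · rw [hook_ad]; exact ⟨b - d, rfl⟩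
  · rw [hook_ab]
    intro hd
    have := Nat.le_of_dvd one_pos hd
    omega
end

section
/- Let ℓ > 2 be an integer, let λ be a partition, let (a,b) be a removable box of λ and (c,d) an addable box of λ lying on the same ladder as (a,b) with a < c (so that c − a = (ℓ−1)(b − d) and m := b − d > 0). Then the box (a,d) lies in λ and h_{(a,d)}^λ = mℓ. -/
/-- If `(a,b)` is a removable box of `λ` and `(c,d)` an addable box of `λ` on the same ladder
with `a < c` (so `c − a = (ℓ−1)(b − d)` and `m := b − d > 0`), then the box `(a,d)` lies in `λ`
and `h_{(a,d)}^λ = mℓ`. -/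
theorem box_on_ladder_hook (ℓ : ℕ) (hℓ : 2 < ℓ) (lam : YoungDiagram) (a b c d : ℕ)
    (hrem : Removable lam (a, b)) (hadd : Addable lam (c, d))
    (hladder : (c : ℤ) - a = ((ℓ : ℤ) - 1) * ((b : ℤ) - d))
    (hac : a < c) (hdb : d < b) :
    (a, d) ∈ lam ∧ lam.hook a d = (b - d) * ℓ := by
  obtain ⟨hab, ν, hν⟩ := hrem
  obtain ⟨hcd, ξ, hξ⟩ := hadd
  -- rowLen a = b + 1
  have h1 : b + 1 ≤ lam.rowLen a := YoungDiagram.mem_iff_lt_rowLen.mp hab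
  have hrow : lam.rowLen a = b + 1 := by
    by_contra h
    have h2 : (a, b + 1) ∈ lam := YoungDiagram.mem_iff_lt_rowLen.mpr (by omega)
    have h3 : (a, b + 1) ∈ ν := by
      rw [← YoungDiagram.mem_cells, hν]
      exact Finset.mem_sdiff.mpr ⟨h2, by simp⟩
    have h4 : (a, b) ∈ ν := ν.up_left_mem le_rfl (by omega) h3
    rw [← YoungDiagram.mem_cells, hν] at h4
    exact (Finset.mem_sdiff.mp h4).2 (by simp)
  -- colLen d = c
  have h5 : lam.colLen d ≤ c := by
    by_contra h
    exact hcd (YoungDiagram.mem_iff_lt_colLen.mpr (by omega))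
  have h6 : (c, d) ∈ ξ := by
    rw [← YoungDiagram.mem_cells, hξ]; exact Finset.mem_insert_self _ _
  have h7 : (c - 1, d) ∈ ξ := ξ.up_left_mem (by omega) le_rfl h6
  have h8 : (c - 1, d) ∈ lam := by
    rw [← YoungDiagram.mem_cells, hξ] at h7
    rcases Finset.mem_insert.mp h7 with h | h
    · exfalso; have : c - 1 = c := (Prod.mk.injEq _ _ _ _).mp h |>.1; omega
    · exact h
  have hcol : lam.colLen d = c := by
    have := YoungDiagram.mem_iff_lt_colLen.mp h8
    omega
  have had : (a, d) ∈ lam := lam.up_left_mem le_rfl hdb.le hab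
  refine ⟨had, ?_⟩
  have hm : (c : ℤ) - a = ((ℓ : ℤ) - 1) * ((b : ℤ) - d) := hladder
  unfold YoungDiagram.hook
  rw [hrow, hcol]
  zify [Nat.le_of_lt hdb, Nat.le_of_lt hac, show d ≤ b + 1 by omega,
    show a + 1 ≤ c by omega]
  linear_combination hm
end

section
/- Let ℓ > 2 be an integer and let λ be an (ℓ,0)-JM partition. Then there do not exist a removable box (a,b) of λ and an addable box (c,d) of λ having the same residue modulo ℓ such that the ladder of (a,b) lies strictly to the left of the ladder of (c,d), i.e. such that (b − a) ≡ (d − c) (mod ℓ) and a + (ℓ−1)b < c + (ℓ−1)d. -/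
/-- Descending chain lemma: if `f` strictly decreases along `[x, t)`, is positive and
always divisible by `ℓ` there, then `f x ≥ (t - x) * ℓ`. -/
lemma chain_le (ℓ : ℕ) (f : ℕ → ℕ) :
    ∀ k x t : ℕ, x < t → t - x = k →
      (∀ y, x ≤ y → y + 1 < t → f (y + 1) < f y) →
      (∀ y, x ≤ y → y < t → 0 < f y) →
      (∀ y, x ≤ y → y < t → ℓ ∣ f y) →
      k * ℓ ≤ f x := by
  intro k
  induction k with
  | zero => intro x t hx ht _ _ _; omega
  | succ k ih =>
    intro x t hx ht hdec hpos hdvd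
    rcases Nat.lt_or_ge (x + 1) t with h1 | h1
    · have hih := ih (x + 1) t h1 (by omega) (fun y hy => hdec y (by omega))
        (fun y hy => hpos y (by omega)) (fun y hy => hdvd y (by omega))
      have hlt := hdec x le_rfl h1
      have d1 := hdvd x le_rfl (by omega)
      have d2 := hdvd (x + 1) (by omega) h1
      have hd : ℓ ∣ f x - f (x + 1) := Nat.dvd_sub d1 d2
      have hle : ℓ ≤ f x - f (x + 1) := Nat.le_of_dvd (by omega) hd
      have : (k + 1) * ℓ = k * ℓ + ℓ := by ring
      omega
    · have hk : k = 0 := by omega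
      have h2 := hpos x le_rfl hx
      have h3 := Nat.le_of_dvd h2 (hdvd x le_rfl hx)
      subst hk; omega

/-- An `(ℓ,0)`-JM partition has no removable box `(a,b)` and addable box `(c,d)` of the same
residue with the ladder of `(a,b)` strictly to the left of the ladder of `(c,d)`, i.e. with
`b − a ≡ d − c (mod ℓ)` and `a + (ℓ−1)b < c + (ℓ−1)d`. -/
theorem JM_no_removable_left_of_addable (ℓ : ℕ) (hℓ : 2 < ℓ) (lam : YoungDiagram)
    (h : IsJM ℓ lam) :
    ¬ ∃ a b c d : ℕ, Removable lam (a, b) ∧ Addable lam (c, d) ∧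
        ((b : ℤ) - a) ≡ ((d : ℤ) - c) [ZMOD (ℓ : ℤ)] ∧
        a + (ℓ - 1) * b < c + (ℓ - 1) * d := by
  rintro ⟨a, b, c, d, ⟨hab, ν, hν⟩, ⟨hcd, μ2, hμ⟩, hres, hlad⟩
  -- Basic facts from removability
  have hb1 : (a, b + 1) ∉ lam := by
    intro hc
    have h1 : ((a, b + 1) : ℕ × ℕ) ∈ ν := by
      rw [← YoungDiagram.mem_cells, hν, Finset.mem_sdiff]
      exact ⟨(YoungDiagram.mem_cells _).mpr hc, by simp⟩
    have h2 : ((a, b) : ℕ × ℕ) ∈ ν := ν.up_left_mem le_rfl (by omega) h1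
    rw [← YoungDiagram.mem_cells, hν, Finset.mem_sdiff] at h2
    simp at h2
  have ha1 : (a + 1, b) ∉ lam := by
    intro hc
    have h1 : ((a + 1, b) : ℕ × ℕ) ∈ ν := by
      rw [← YoungDiagram.mem_cells, hν, Finset.mem_sdiff]
      exact ⟨(YoungDiagram.mem_cells _).mpr hc, by simp⟩
    have h2 : ((a, b) : ℕ × ℕ) ∈ ν := ν.up_left_mem (by omega) le_rfl h1
    rw [← YoungDiagram.mem_cells, hν, Finset.mem_sdiff] at h2
    simp at h2
  have hrowa : lam.rowLen a = b + 1 := by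
    have h1 : b < lam.rowLen a := YoungDiagram.mem_iff_lt_rowLen.mp hab
    have h2 : ¬ b + 1 < lam.rowLen a := fun hc => hb1 (YoungDiagram.mem_iff_lt_rowLen.mpr hc)
    omega
  have hcola : lam.colLen b = a + 1 := by
    have h1 : a < lam.colLen b := YoungDiagram.mem_iff_lt_colLen.mp hab
    have h2 : ¬ a + 1 < lam.colLen b := fun hc => ha1 (YoungDiagram.mem_iff_lt_colLen.mpr hc)
    omega
  -- Basic facts from addability
  have hrowc : lam.rowLen c = d := by
    have h2 : ¬ d < lam.rowLen c := fun hc => hcd (YoungDiagram.mem_iff_lt_rowLen.mpr hc)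
    rcases Nat.eq_zero_or_pos d with hd | hd
    · omega
    · have h1 : ((c, d - 1) : ℕ × ℕ) ∈ lam := by
        have hm : ((c, d) : ℕ × ℕ) ∈ μ2 := by
          rw [← YoungDiagram.mem_cells, hμ]; exact Finset.mem_insert_self _ _
        have hm2 : ((c, d - 1) : ℕ × ℕ) ∈ μ2 := μ2.up_left_mem le_rfl (by omega) hm
        rw [← YoungDiagram.mem_cells, hμ, Finset.mem_insert] at hm2
        rcases hm2 with hm2 | hm2
        · exfalso; have : d - 1 = d := congrArg Prod.snd hm2; omega
        · exact (YoungDiagram.mem_cells _).mp hm2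
      have := YoungDiagram.mem_iff_lt_rowLen.mp h1
      omega
  have hcold : lam.colLen d = c := by
    have h2 : ¬ c < lam.colLen d := fun hc => hcd (YoungDiagram.mem_iff_lt_colLen.mpr hc)
    rcases Nat.eq_zero_or_pos c with hc0 | hc0
    · omega
    · have h1 : ((c - 1, d) : ℕ × ℕ) ∈ lam := by
        have hm : ((c, d) : ℕ × ℕ) ∈ μ2 := by
          rw [← YoungDiagram.mem_cells, hμ]; exact Finset.mem_insert_self _ _
        have hm2 : ((c - 1, d) : ℕ × ℕ) ∈ μ2 := μ2.up_left_mem (by omega) le_rfl hm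
        rw [← YoungDiagram.mem_cells, hμ, Finset.mem_insert] at hm2
        rcases hm2 with hm2 | hm2
        · exfalso; have : c - 1 = c := congrArg Prod.fst hm2; omega
        · exact (YoungDiagram.mem_cells _).mp hm2
      have := YoungDiagram.mem_iff_lt_colLen.mp h1
      omega
  have hookab : lam.hook a b = 1 := by
    unfold YoungDiagram.hook; omega
  have hdvdab : ¬ ℓ ∣ lam.hook a b := by
    rw [hookab]; intro hdvd; have := Nat.le_of_dvd one_pos hdvd; omega
  have hdvdint : (ℓ : ℤ) ∣ ((d : ℤ) - c) - ((b : ℤ) - a) := Int.ModEq.dvd hres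
  rcases lt_trichotomy a c with hac | hac | hac
  · -- Case a < c : addable box strictly below removable box
    have hdb : d ≤ b := by
      have h1 : lam.rowLen c ≤ lam.rowLen (a + 1) := lam.rowLen_anti _ _ (by omega)
      have h2 : ¬ b < lam.rowLen (a + 1) := fun hc => ha1 (YoungDiagram.mem_iff_lt_rowLen.mpr hc)
      omega
    set u := c - a with hu
    set v := b - d with hv
    have hdvduv : ℓ ∣ u + v := by
      have : ((d : ℤ) - c) - ((b : ℤ) - a) = -(((u : ℕ) : ℤ) + ((v : ℕ) : ℤ)) := by
        push_cast [hu, hv]; omega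
      rw [this, dvd_neg] at hdvdint
      exact_mod_cast hdvdint
    -- boxes in column d, rows a..c-1
    have hmemcol : ∀ r, r < c → ((r, d) : ℕ × ℕ) ∈ lam := fun r hr =>
      YoungDiagram.mem_iff_lt_colLen.mpr (by omega)
    have hrowge : ∀ r, r < c → d + 1 ≤ lam.rowLen r := fun r hr => by
      have := YoungDiagram.mem_iff_lt_rowLen.mp (hmemcol r hr); omega
    have hookform : ∀ r, r < c → lam.hook r d = (lam.rowLen r - d) + (c - (r + 1)) := by
      intro r hr; unfold YoungDiagram.hook; rw [hcold]
    have hookad : lam.hook a d = u + v := by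
      rw [hookform a (by omega), hrowa]
      have := hrowge a (by omega)
      omega
    by_cases hex : ∃ x, a ≤ x ∧ x < c ∧ ¬ ℓ ∣ lam.hook x d
    · obtain ⟨x, hx1, hx2, hx3⟩ := hex
      exact h ⟨a, d, b, x, YoungDiagram.mem_iff_lt_rowLen.mpr (by omega), hab,
        hmemcol x hx2, by rw [hookad]; exact hdvduv, hdvdab, hx3⟩
    · push_neg at hex
      have hchain := chain_le ℓ (fun r => lam.hook r d) u a c hac (by omega)
        (fun y hy hyc => by
          have g1 := hookform y (by omega)
          have g2 := hookform (y + 1) hyc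
          have g3 := hrowge y (by omega)
          have g4 := hrowge (y + 1) hyc
          have g5 : lam.rowLen (y + 1) ≤ lam.rowLen y := lam.rowLen_anti _ _ (by omega)
          simp only [g1, g2]
          omega)
        (fun y hy hyc => by
          have g1 := hookform y hyc
          have g3 := hrowge y hyc
          simp only [g1]; omega)
        (fun y hy hyc => hex y hy hyc)
      have hchain' : u * ℓ ≤ lam.hook a d := hchain
      rw [hookad] at hchain'
      -- u * ℓ ≤ u + v, and ladder gives (ℓ-1) * v < u
      have hm : ℓ - 1 ≥ 2 := by omega
      set m := ℓ - 1 with hmdef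
      have hlad2 : m * v < u := by
        have hb' : b = d + v := by omega
        have hc' : c = a + u := by omega
        rw [hb', hc'] at hlad
        have : m * (d + v) = m * d + m * v := by ring
        omega
      have hchain2 : u * (m + 1) ≤ u + v := by
        have : m + 1 = ℓ := by omega
        rw [this]; exact hchain'
      have hu1 : 1 ≤ u := by omega
      nlinarith [hlad2, hchain2, hu1, hm]
  · -- Case a = c : impossible by residue
    subst hac
    have hd : d = b + 1 := by omega
    have : ((d : ℤ) - a) - ((b : ℤ) - a) = 1 := by rw [hd]; push_cast; omega
    rw [this] at hdvdint
    have := Int.le_of_dvd one_pos hdvdint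
    omega
  · -- Case c < a : addable box strictly above removable box
    have hbd : b + 1 ≤ d := by
      have h1 : lam.rowLen a ≤ lam.rowLen c := lam.rowLen_anti _ _ (by omega)
      omega
    set u := a - c with hu
    set v := d - b with hv
    have hdvduv : ℓ ∣ u + v := by
      have : ((d : ℤ) - c) - ((b : ℤ) - a) = ((u : ℕ) : ℤ) + ((v : ℕ) : ℤ) := by
        push_cast [hu, hv]; omega
      rw [this] at hdvdint
      exact_mod_cast hdvdint
    -- boxes in row c, columns b..d-1
    have hmemrow : ∀ y, y < d → ((c, y) : ℕ × ℕ) ∈ lam := fun y hy =>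
      YoungDiagram.mem_iff_lt_rowLen.mpr (by omega)
    have hcolge : ∀ y, y < d → c + 1 ≤ lam.colLen y := fun y hy => by
      have := YoungDiagram.mem_iff_lt_colLen.mp (hmemrow y hy); omega
    have hookform : ∀ y, y < d → lam.hook c y = (d - y) + (lam.colLen y - (c + 1)) := by
      intro y hy; unfold YoungDiagram.hook; rw [hrowc]
    have hookcb : lam.hook c b = u + v := by
      rw [hookform b (by omega), hcola]
      omega
    by_cases hex : ∃ y, b ≤ y ∧ y < d ∧ ¬ ℓ ∣ lam.hook c y
    · obtain ⟨y, hy1, hy2, hy3⟩ := hex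
      exact h ⟨c, b, y, a, hmemrow b (by omega), hmemrow y hy2,
        hab, by rw [hookcb]; exact hdvduv, hy3, hdvdab⟩
    · push_neg at hex
      have hchain := chain_le ℓ (fun y => lam.hook c y) v b d (by omega) (by omega)
        (fun y hy hyd => by
          have g1 := hookform y (by omega)
          have g2 := hookform (y + 1) hyd
          have g3 := hcolge y (by omega)
          have g4 := hcolge (y + 1) hyd
          have g5 : lam.colLen (y + 1) ≤ lam.colLen y := lam.colLen_anti _ _ (by omega)
          simp only [g1, g2]
          omega)
        (fun y hy hyd => by
          have g1 := hookform y hyd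
          simp only [g1]; omega)
        (fun y hy hyd => hex y hy hyd)
      have hchain' : v * ℓ ≤ lam.hook c b := hchain
      rw [hookcb] at hchain'
      have hm : ℓ - 1 ≥ 2 := by omega
      set m := ℓ - 1 with hmdef
      have hlad2 : u < m * v := by
        have hd' : d = b + v := by omega
        have ha' : a = c + u := by omega
        rw [hd', ha'] at hlad
        have : m * (b + v) = m * b + m * v := by ring
        omega
      have hchain2 : v * (m + 1) ≤ u + v := by
        have : m + 1 = ℓ := by omega
        rw [this]; exact hchain'
      nlinarith [hlad2, hchain2]
end
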